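/- Let a ∈ (0,1], η0, η+ ∈ (0,1) with η0 ≠ η+, and k a nonnegative integer. Define P0(k) = a(1-η+/2)^k - a²(1-(η0+η+)/2)^k and P1(k) = a(1-η0/2)^k - a²(1-(η0+η+)/2)^k. Then P_guess(k) = max{P0(k),P1(k)} / (P0(k)+P1(k)) satisfies P_guess(0) = 1/2, P_guess(k) > 1/2 for k ≥ 1, and P_guess(k) → 1 as k → ∞. -/

import Mathlib

/-- Four-detector setup with (1-d0)(1-d1) = (1-d+)(1-d-) = a, η0 = η1 ≠ η+ = η-:
with P0(k), P1(k) as given, P_guess(k) = max{P0,P1}/(P0+P1) equals 1/2 for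
k = 0, is > 1/2 for k ≥ 1, and tends to 1 as k → ∞. -/
theorem stmt_9 (a η0 ηp : ℝ) (ha : a ∈ Set.Ioo (0:ℝ) 1)
    (hη0 : η0 ∈ Set.Ioo (0:ℝ) 1) (hηp : ηp ∈ Set.Ioo (0:ℝ) 1)
    (hne : η0 ≠ ηp)
    (P0 P1 Pg : ℕ → ℝ)
    (hP0 : ∀ k, P0 k = a*(1-ηp/2)^k - a^2*(1-(η0+ηp)/2)^k)
    (hP1 : ∀ k, P1 k = a*(1-η0/2)^k - a^2*(1-(η0+ηp)/2)^k)
    (hPg : ∀ k, Pg k = max (P0 k) (P1 k) / (P0 k + P1 k)) :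
    Pg 0 = 1/2 ∧ (∀ k, 1 ≤ k → 1/2 < Pg k) ∧
      Filter.Tendsto Pg Filter.atTop (nhds 1) := by
  obtain ⟨ha0, ha1⟩ := ha
  obtain ⟨h00, h01⟩ := hη0
  obtain ⟨hp0, hp1⟩ := hηp
  obtain ⟨x, hxdef⟩ : ∃ t : ℝ, t = 1 - ηp/2 := ⟨_, rfl⟩
  obtain ⟨y, hydef⟩ : ∃ t : ℝ, t = 1 - η0/2 := ⟨_, rfl⟩
  obtain ⟨z, hzdef⟩ : ∃ t : ℝ, t = 1 - (η0+ηp)/2 := ⟨_, rfl⟩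
  simp only [← hxdef, ← hydef, ← hzdef] at hP0 hP1
  have hx0 : 0 < x := by rw [hxdef]; linarith
  have hy0 : 0 < y := by rw [hydef]; linarith
  have hz0 : 0 < z := by rw [hzdef]; linarith
  have hzx : z < x := by rw [hzdef, hxdef]; linarith
  have hzy : z < y := by rw [hzdef, hydef]; linarith
  have hxy : x ≠ y := by
    rw [hxdef, hydef]; intro h; apply hne; linarith
  have hP0pos : ∀ k, 0 < P0 k := by
    intro k
    rw [hP0 k]
    have h1 : z^k ≤ x^k := pow_le_pow_left₀ hz0.le hzx.le k
    have h2 : 0 < x^k := pow_pos hx0 k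
    have h3 : a^2 * z^k ≤ a^2 * x^k := mul_le_mul_of_nonneg_left h1 (sq_nonneg a)
    have h4 : a^2 * x^k < a * x^k := by nlinarith [mul_pos (mul_pos ha0 (show (0:ℝ) < 1-a by linarith)) h2]
    linarith
  have hP1pos : ∀ k, 0 < P1 k := by
    intro k
    rw [hP1 k]
    have h1 : z^k ≤ y^k := pow_le_pow_left₀ hz0.le hzy.le k
    have h2 : 0 < y^k := pow_pos hy0 k
    have h3 : a^2 * z^k ≤ a^2 * y^k := mul_le_mul_of_nonneg_left h1 (sq_nonneg a)
    have h4 : a^2 * y^k < a * y^k := by nlinarith [mul_pos (mul_pos ha0 (show (0:ℝ) < 1-a by linarith)) h2]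
    linarith
  refine ⟨?_, ?_, ?_⟩
  · -- Pg 0 = 1/2
    rw [hPg, hP0, hP1]
    simp only [pow_zero, mul_one, max_self]
    rw [div_eq_iff (by nlinarith : (a - a^2) + (a - a^2) ≠ 0)]
    ring
  · -- Pg k > 1/2 for k ≥ 1
    intro k hk
    have hS : 0 < P0 k + P1 k := by linarith [hP0pos k, hP1pos k]
    rw [hPg, lt_div_iff₀ hS]
    have hk0 : k ≠ 0 := by omega
    have hxyk : x^k ≠ y^k := by
      rcases hxy.lt_or_gt with h | h
      · exact ne_of_lt (pow_lt_pow_left₀ h hx0.le hk0)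
      · exact (ne_of_lt (pow_lt_pow_left₀ h hy0.le hk0)).symm
    have hne2 : P0 k ≠ P1 k := by
      rw [hP0, hP1]
      intro h
      apply hxyk
      have : a * x^k = a * y^k := by linarith
      exact mul_left_cancel₀ ha0.ne' this
    rcases hne2.lt_or_gt with h | h
    · rw [max_eq_right h.le]; linarith
    · rw [max_eq_left h.le]; linarith
  · -- limit
    obtain ⟨m, hmdef⟩ : ∃ t : ℝ, t = max x y := ⟨_, rfl⟩
    obtain ⟨n, hndef⟩ : ∃ t : ℝ, t = min x y := ⟨_, rfl⟩
    have hm0 : 0 < m := hmdef ▸ lt_of_lt_of_le hx0 (le_max_left x y)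
    have hnm : n < m := hndef ▸ hmdef ▸ min_lt_max.mpr hxy
    have hzn : z < n := hndef ▸ lt_min hzx hzy
    obtain ⟨r, hrdef⟩ : ∃ t : ℝ, t = z/m := ⟨_, rfl⟩
    obtain ⟨s, hsdef⟩ : ∃ t : ℝ, t = n/m := ⟨_, rfl⟩
    have hr0 : 0 ≤ r := hrdef ▸ div_nonneg hz0.le hm0.le
    have hr1 : r < 1 := hrdef ▸ (div_lt_one hm0).mpr (lt_trans hzn hnm)
    have hs0 : 0 ≤ s := hsdef ▸ div_nonneg (le_trans hz0.le hzn.le) hm0.le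
    have hs1 : s < 1 := hsdef ▸ (div_lt_one hm0).mpr hnm
    have hrs : r ≤ s := hrdef ▸ hsdef ▸ (div_le_div_iff_of_pos_right hm0).mpr hzn.le
    have key : ∀ k, Pg k = (1 - a*r^k)/(1 + s^k - 2*a*r^k) := by
      intro k
      have hmax : max (P0 k) (P1 k) = a*m^k - a^2*z^k := by
        rw [hP0, hP1]
        rcases le_total x y with h | h
        · have hk : x^k ≤ y^k := pow_le_pow_left₀ hx0.le h k
          rw [max_eq_right (by nlinarith : a*x^k - a^2*z^k ≤ a*y^k - a^2*z^k),
            hmdef, max_eq_right h]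
        · have hk : y^k ≤ x^k := pow_le_pow_left₀ hy0.le h k
          rw [max_eq_left (by nlinarith : a*y^k - a^2*z^k ≤ a*x^k - a^2*z^k),
            hmdef, max_eq_left h]
      have hsum : P0 k + P1 k = a*m^k + a*n^k - 2*a^2*z^k := by
        rw [hP0, hP1]
        rcases le_total x y with h | h
        · rw [hmdef, hndef, max_eq_right h, min_eq_left h]; ring
        · rw [hmdef, hndef, max_eq_left h, min_eq_right h]; ring
      have hmk : 0 < m^k := pow_pos hm0 k
      have hden1 : 0 < a*m^k + a*n^k - 2*a^2*z^k := by
        rw [← hsum]; linarith [hP0pos k, hP1pos k]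
      have hden2 : 0 < 1 + s^k - 2*a*r^k := by
        have h1 : r^k ≤ s^k := pow_le_pow_left₀ hr0 hrs k
        have h2 : r^k ≤ 1 := pow_le_one₀ hr0 hr1.le
        have h3 : 0 ≤ r^k := pow_nonneg hr0 k
        nlinarith
      rw [hPg, hmax, hsum, div_eq_div_iff hden1.ne' hden2.ne']
      rw [hrdef, hsdef, div_pow, div_pow]
      field_simp
    rw [show Pg = fun k : ℕ => (1 - a*r^k)/(1 + s^k - 2*a*r^k) from funext key]
    have hrt : Filter.Tendsto (fun k => r^k) Filter.atTop (nhds 0) :=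
      tendsto_pow_atTop_nhds_zero_of_lt_one hr0 hr1
    have hst : Filter.Tendsto (fun k => s^k) Filter.atTop (nhds 0) :=
      tendsto_pow_atTop_nhds_zero_of_lt_one hs0 hs1
    have hnum : Filter.Tendsto (fun k : ℕ => 1 - a*r^k) Filter.atTop (nhds 1) := by
      have h := (hrt.const_mul a).const_sub 1
      rw [mul_zero, sub_zero] at h
      exact h
    have hden : Filter.Tendsto (fun k : ℕ => 1 + s^k - 2*a*r^k) Filter.atTop (nhds 1) := by
      have h := (hst.const_add 1).sub (hrt.const_mul (2*a))
      rw [mul_zero, add_zero, sub_zero] at h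
      exact h
    have h := hnum.div hden one_ne_zero
    rw [div_one] at h
    exact h
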